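/- For a finite abelian group G of order n and any k with gcd(n, k) = 1, the number N(k, b) of k-subsets of G summing to b equals C(n, k)/n for every b ∈ G (in particular it is independent of b). -/
import Mathlib

open Finset

lemma card_filter_sum_eq (G : Type) [AddCommGroup G] [Fintype G] [DecidableEq G]
    (k : ℕ) (hgcd : Nat.Coprime (Nat.card G) k) (b c : G) :
    ((Finset.univ.powersetCard k).filter (fun S : Finset G => S.sum id = b)).card =
    ((Finset.univ.powersetCard k).filter (fun S : Finset G => S.sum id = c)).card := by
  obtain ⟨g, hg⟩ := (Nat.Coprime.nsmul_right_bijective hgcd).surjective (c - b)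
  apply Finset.card_bij (fun S _ => S.image (· + g))
  · intro S hS
    simp only [Finset.mem_filter, Finset.mem_powersetCard] at hS ⊢
    have hinj : Function.Injective (· + g) := add_left_injective g
    constructor
    · refine ⟨Finset.subset_univ _, ?_⟩
      rw [Finset.card_image_of_injective _ hinj, hS.1.2]
    · rw [Finset.sum_image (fun x _ y _ h => hinj h)]
      simp only [id]
      rw [Finset.sum_add_distrib, Finset.sum_const, hS.1.2]
      have : S.sum id = b := hS.2
      simp only [id] at this
      have hg' : k • g = c - b := hg
      rw [this, hg']
      abel
  · intro S hS T hT h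
    have hinj : Function.Injective (· + g) := add_left_injective g
    have := Finset.image_injective hinj h
    exact this
  · intro T hT
    refine ⟨T.image (· + (-g)), ?_, ?_⟩
    · simp only [Finset.mem_filter, Finset.mem_powersetCard] at hT ⊢
      have hinj : Function.Injective (· + (-g)) := add_left_injective (-g)
      refine ⟨⟨Finset.subset_univ _, ?_⟩, ?_⟩
      · rw [Finset.card_image_of_injective _ hinj, hT.1.2]
      · rw [Finset.sum_image (fun x _ y _ h => hinj h)]
        simp only [id]
        rw [Finset.sum_add_distrib, Finset.sum_const, hT.1.2]
        have : T.sum id = c := hT.2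
        simp only [id] at this
        have hg' : k • g = c - b := hg
        rw [this]
        have : k • -g = -(k • g) := smul_neg k g
        rw [this, hg']
        abel
    · rw [Finset.image_image]
      have : ((· + g) ∘ (· + (-g))) = id := by funext x; simp
      rw [this, Finset.image_id]

theorem stmt_13 (G : Type) [AddCommGroup G] [Fintype G] [DecidableEq G]
    (n k : ℕ) (hn : n = Fintype.card G) (hgcd : Nat.gcd n k = 1) (b : G) :
    ((((Finset.univ.powersetCard k).filter
        (fun S : Finset G => S.sum id = b)).card : ℝ)) =
      (n.choose k : ℝ) / (n : ℝ) := by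
  have hcard : Nat.card G = n := by rw [hn, Nat.card_eq_fintype_card]
  have hcop : Nat.Coprime (Nat.card G) k := by rw [hcard]; exact hgcd
  have key : ∀ c : G,
      ((Finset.univ.powersetCard k).filter (fun S : Finset G => S.sum id = c)).card =
      ((Finset.univ.powersetCard k).filter (fun S : Finset G => S.sum id = b)).card :=
    fun c => card_filter_sum_eq G k hcop c b
  have htot : (Finset.univ.powersetCard k : Finset (Finset G)).card =
      ∑ c : G, ((Finset.univ.powersetCard k).filter
        (fun S : Finset G => S.sum id = c)).card :=
    Finset.card_eq_sum_card_fiberwise (fun S _ => Finset.mem_univ _)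
  have hN : n * ((Finset.univ.powersetCard k).filter
      (fun S : Finset G => S.sum id = b)).card = n.choose k := by
    have h1 : (Finset.univ.powersetCard k : Finset (Finset G)).card = n.choose k := by
      rw [Finset.card_powersetCard, Finset.card_univ, ← hn]
    rw [← h1, htot, Finset.sum_congr rfl (fun c _ => key c), Finset.sum_const,
      Finset.card_univ, ← hn, smul_eq_mul]
  have hn0 : (n : ℝ) ≠ 0 := by
    rw [hn]
    exact_mod_cast Fintype.card_ne_zero
  rw [eq_div_iff hn0, mul_comm]
  exact_mod_cast hN
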